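/- Let k, r be positive integers with r ≥ 2 and gcd(k+1, r-1) = 1, and set β = -(r-1)/(k+1). If λ is a (k,r,n)-admissible partition and λ' is the conjugate partition, then for all 1 ≤ i ≤ n and 1 ≤ j ≤ λ_i, (λ'_j - i + 1)·β + λ_i - j ≠ 0. -/
import Mathlib


/-- For β = -(r-1)/(k+1) and λ a (k,r,n)-admissible partition
with conjugate λ', one has (λ'_j - i + 1)·β + λ_i - j ≠ 0 for all nodes
(i,j) of λ. -/
theorem admissible_hook_nonzero (k r n : ℕ) (hk : 1 ≤ k) (hr : 2 ≤ r)
    (hcop : Nat.Coprime (k + 1) (r - 1))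
    (β : ℚ) (hβ : β = -((r : ℚ) - 1) / ((k : ℚ) + 1))
    (lam : ℕ → ℕ)
    (hmono : ∀ i, 1 ≤ i → lam (i + 1) ≤ lam i)
    (hadm : ∀ i, 1 ≤ i → i + k ≤ n → lam (i + k) + r ≤ lam i)
    (conj : ℕ → ℕ)
    (hconj : ∀ j, conj j = ((Finset.Icc 1 n).filter (fun m => j ≤ lam m)).card)
    (i j : ℕ) (hi1 : 1 ≤ i) (hin : i ≤ n) (hj1 : 1 ≤ j) (hj : j ≤ lam i) :
    ((conj j : ℚ) - (i : ℚ) + 1) * β + (lam i : ℚ) - (j : ℚ) ≠ 0 := by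
  -- monotonicity of lam on [1,∞)
  have mono : ∀ a b, 1 ≤ a → a ≤ b → lam b ≤ lam a := by
    intro a b ha hab
    induction hab with
    | refl => exact le_rfl
    | @step m h ih =>
      exact le_trans (hmono m (le_trans ha h)) ih
  -- iterated admissibility
  have iter : ∀ t a, 1 ≤ a → a + t * k ≤ n → lam (a + t * k) + t * r ≤ lam a := by
    intro t
    induction t with
    | zero => intro a ha h; simp
    | succ t ih =>
      intro a ha h
      have e : a + (t + 1) * k = a + k + t * k := by ring
      have h1 : lam (a + k) + r ≤ lam a := hadm a ha (by
        have : t * k + k ≤ (t+1) * k := by ring_nf; omega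
        omega)
      have h2 : lam (a + k + t * k) + t * r ≤ lam (a + k) := ih (a + k) (by omega) (by omega)
      have e2 : (t + 1) * r = t * r + r := by ring
      rw [e, e2]
      omega
  -- initial segment property of the conjugate
  have seg : ∀ m, 1 ≤ m → m ≤ conj j → j ≤ lam m := by
    intro m hm hmc
    by_contra h
    push_neg at h
    have hsub : (Finset.Icc 1 n).filter (fun x => j ≤ lam x) ⊆ Finset.Icc 1 (m - 1) := by
      intro x hx
      simp only [Finset.mem_filter, Finset.mem_Icc] at hx ⊢
      refine ⟨hx.1.1, ?_⟩
      by_contra hxm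
      push_neg at hxm
      have : lam x ≤ lam m := mono m x hm (by omega)
      omega
    have hcard := Finset.card_le_card hsub
    rw [Nat.card_Icc] at hcard
    rw [hconj] at hmc
    omega
  have hci : i ≤ conj j := by
    rw [hconj]
    calc i = (Finset.Icc 1 i).card := by rw [Nat.card_Icc]; omega
      _ ≤ _ := Finset.card_le_card (by
          intro x hx
          simp only [Finset.mem_Icc, Finset.mem_filter] at hx ⊢
          exact ⟨⟨hx.1, le_trans hx.2 hin⟩, le_trans hj (mono x i hx.1 hx.2)⟩)
  have hcn : conj j ≤ n := by
    rw [hconj]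
    calc ((Finset.Icc 1 n).filter (fun m => j ≤ lam m)).card
        ≤ (Finset.Icc 1 n).card := Finset.card_le_card (Finset.filter_subset _ _)
      _ = n := by rw [Nat.card_Icc]; omega
  -- now the main argument
  intro heq
  have hk0 : (k : ℚ) + 1 ≠ 0 := by positivity
  rw [hβ] at heq
  have heqQ : ((lam i : ℚ) - j) * ((k : ℚ) + 1) = ((conj j : ℚ) - i + 1) * ((r : ℚ) - 1) := by
    field_simp at heq
    linarith [heq]
  have heqZ : ((lam i : ℤ) - j) * ((k : ℤ) + 1) = ((conj j : ℤ) - i + 1) * ((r : ℤ) - 1) := by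
    exact_mod_cast heqQ
  have hr1 : (1 : ℕ) ≤ r := by omega
  have hcopZ : IsCoprime ((k : ℤ) + 1) ((r : ℤ) - 1) := by
    rw [Int.isCoprime_iff_gcd_eq_one]
    have e1 : ((k : ℤ) + 1) = ((k + 1 : ℕ) : ℤ) := by push_cast; ring
    have e2 : ((r : ℤ) - 1) = ((r - 1 : ℕ) : ℤ) := by push_cast [hr1]; ring
    rw [e1, e2, Int.gcd_natCast_natCast]
    exact hcop
  have hdvd : ((k : ℤ) + 1) ∣ ((conj j : ℤ) - i + 1) * ((r : ℤ) - 1) :=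
    ⟨(lam i : ℤ) - j, by rw [← heqZ]; ring⟩
  obtain ⟨t, ht⟩ := hcopZ.dvd_of_dvd_mul_right hdvd
  have hK0 : ((k : ℤ) + 1) ≠ 0 := by positivity
  have hB : (lam i : ℤ) - j = t * ((r : ℤ) - 1) := by
    have h2 : ((lam i : ℤ) - j) * ((k : ℤ) + 1) = (t * ((r : ℤ) - 1)) * ((k : ℤ) + 1) := by
      rw [heqZ, ht]; ring
    exact mul_right_cancel₀ hK0 h2
  have hRpos : (0 : ℤ) < (r : ℤ) - 1 := by
    have : (2 : ℤ) ≤ (r : ℤ) := by exact_mod_cast hr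
    linarith
  have hBnn : (0 : ℤ) ≤ (lam i : ℤ) - j := by
    have : (j : ℤ) ≤ (lam i : ℤ) := by exact_mod_cast hj
    linarith
  have ht0 : 0 ≤ t := by
    by_contra h
    push_neg at h
    have : t * ((r : ℤ) - 1) < 0 := mul_neg_of_neg_of_pos h hRpos
    linarith
  set t' := t.toNat with ht'def
  have htt : (t' : ℤ) = t := Int.toNat_of_nonneg ht0
  rcases Nat.eq_zero_or_pos t' with h0 | h1
  · -- t = 0: conj j = i - 1 < i, contradiction
    have : t = 0 := by omega
    rw [this] at ht
    simp at ht
    omega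
  · -- t ≥ 1
    have hcast1 : ((t' * (k + 1) : ℕ) : ℤ) = ((k : ℤ) + 1) * t := by
      push_cast [htt]; ring
    have hc : conj j + 1 = i + t' * (k + 1) := by omega
    have hcast2 : ((t' * (r - 1) : ℕ) : ℤ) = t * ((r : ℤ) - 1) := by
      push_cast [hr1, htt]; ring
    have hlam : lam i = j + t' * (r - 1) := by omega
    have ekk : t' * (k + 1) = t' * k + t' := by ring
    have hle : i + t' * k ≤ conj j := by omega
    have hseg : j ≤ lam (i + t' * k) := seg _ (by omega) hle
    have hiter : lam (i + t' * k) + t' * r ≤ lam i := iter t' i hi1 (by omega)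
    have err : t' * r = t' * (r - 1) + t' := by
      have : t' * r = t' * ((r - 1) + 1) := by congr 1; omega
      rw [this]; ring
    omega
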